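/- Let (X,d) be a metric space and μ a Borel measure on X. Let 1 < p ≤ Q < ∞ and suppose μ(B(x,r)) ≤ C·r^Q for all x ∈ X and r > 0 (closed balls), where C > 0 is fixed. Let A ⊆ X be a compact set with H^{Q-p}(A) < ∞ and fix R > 0. Then there exists a constant C'' > 0, depending only on C, Q, p, and H^{Q-p}(A), such that for every r ∈ (0,R) there exists a Borel function ρ : X → [0,∞] with ∫_X ρ^p dμ ≤ C'' and with the property that ∫_0^L ρ(c(t)) dt ≥ 1 for every L > 0 and every curve c : [0,L] → X parametrized by arc length whose image meets A and also meets X \ N(A,R), where N(A,R) = {x : dist(x,A) ≤ R}. -/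

import Mathlib

open MeasureTheory Set Metric
open scoped ENNReal

/-- A curve `c : [0,L] → X` parametrized by arc length: `c` is 1-Lipschitz on `[0,L]`
and its length (total variation) on each subinterval `[s,t] ⊆ [0,L]` equals `t - s`. -/
def IsArcLengthParam {X : Type*} [PseudoMetricSpace X] (L : ℝ) (c : ℝ → X) : Prop :=
  LipschitzOnWith 1 c (Icc 0 L) ∧
    ∀ s t : ℝ, 0 ≤ s → s ≤ t → t ≤ L →
      eVariationOn c (Icc s t) = ENNReal.ofReal (t - s)

lemma key_lemma {X : Type} [MetricSpace X] [MeasurableSpace X] [BorelSpace X]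
    (μ : Measure X) (p Q C : ℝ) (hp : 1 < p) (hpQ : p ≤ Q) (hC : 0 < C)
    (hball : ∀ (x : X) (r : ℝ), 0 < r → μ (closedBall x r) ≤ ENNReal.ofReal (C * r ^ Q))
    {ι : Type} [Countable ι] (x : ι → X) (rad : ι → ℝ) (hrad : ∀ j, 0 < rad j)
    {R : ℝ} (hR : 0 < R) (hradR : ∀ j, rad j ≤ R)
    {A : Set X} (hcov : A ⊆ ⋃ j, closedBall (x j) (rad j))
    {S : ℝ≥0∞} (hS : ∑' j, (ENNReal.ofReal (rad j)) ^ (Q - p) ≤ S) :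
    ∃ ρ : X → ℝ≥0∞, Measurable ρ ∧
      (∫⁻ x, ρ x ^ p ∂μ) ≤ ENNReal.ofReal C * 2 ^ Q * S ∧
      ∀ L : ℝ, 0 < L → ∀ c : ℝ → X, IsArcLengthParam L c →
        (∃ t ∈ Icc 0 L, c t ∈ A) →
        (∃ t ∈ Icc 0 L, c t ∉ cthickening R A) →
        1 ≤ ∫⁻ t in Icc 0 L, ρ (c t) ∂volume := by
  have hp0 : (0:ℝ) < p := lt_trans one_pos hp
  have hQ0 : (0:ℝ) ≤ Q := le_trans hp0.le hpQ
  set e : ι → ℝ≥0∞ := fun j => ENNReal.ofReal (rad j) with he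
  have he0 : ∀ j, e j ≠ 0 := fun j => by
    exact (ENNReal.ofReal_pos.2 (hrad j)).ne'
  have het : ∀ j, e j ≠ ⊤ := fun j => ENNReal.ofReal_ne_top
  set T : ι → X → ℝ≥0∞ :=
    fun j => (closedBall (x j) (2 * rad j)).indicator (fun _ => (e j)⁻¹) with hT
  have hTmeas : ∀ j, Measurable (T j) := fun j =>
    measurable_const.indicator measurableSet_closedBall
  refine ⟨fun y => ⨆ j, T j y, Measurable.iSup hTmeas, ?_, ?_⟩
  · -- integral bound
    have hpw : ∀ y, (⨆ j, T j y) ^ p ≤ ∑' j, (T j y) ^ p := by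
      intro y
      have h1 : (⨆ j, T j y) ≤ (∑' j, (T j y) ^ p) ^ p⁻¹ := by
        refine iSup_le fun j => ?_
        have : T j y = ((T j y) ^ p) ^ p⁻¹ := by
          rw [← ENNReal.rpow_mul, mul_inv_cancel₀ hp0.ne', ENNReal.rpow_one]
        rw [this]
        exact ENNReal.rpow_le_rpow (ENNReal.le_tsum j) (by positivity)
      calc (⨆ j, T j y) ^ p ≤ ((∑' j, (T j y) ^ p) ^ p⁻¹) ^ p :=
            ENNReal.rpow_le_rpow h1 hp0.le
        _ = ∑' j, (T j y) ^ p := by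
            rw [← ENNReal.rpow_mul, inv_mul_cancel₀ hp0.ne', ENNReal.rpow_one]
    calc ∫⁻ y, (⨆ j, T j y) ^ p ∂μ ≤ ∫⁻ y, ∑' j, (T j y) ^ p ∂μ :=
          lintegral_mono hpw
      _ = ∑' j, ∫⁻ y, (T j y) ^ p ∂μ :=
          lintegral_tsum fun j => ((hTmeas j).pow_const _).aemeasurable
      _ ≤ ∑' j, ENNReal.ofReal C * 2 ^ Q * (e j) ^ (Q - p) := by
          refine ENNReal.tsum_le_tsum fun j => ?_
          have hind : ∀ y, (T j y) ^ p
              = (closedBall (x j) (2 * rad j)).indicator (fun _ => ((e j)⁻¹) ^ p) y := by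
            intro y
            by_cases hy : y ∈ closedBall (x j) (2 * rad j)
            · simp [hT, indicator_of_mem hy]
            · simp [hT, indicator_of_notMem hy, ENNReal.zero_rpow_of_pos hp0]
          calc ∫⁻ y, (T j y) ^ p ∂μ
              = ((e j)⁻¹) ^ p * μ (closedBall (x j) (2 * rad j)) := by
                simp_rw [hind]
                rw [lintegral_indicator measurableSet_closedBall, setLIntegral_const]
            _ ≤ ((e j)⁻¹) ^ p * ENNReal.ofReal (C * (2 * rad j) ^ Q) := by
                exact mul_le_mul_right (hball _ _ (by linarith [hrad j])) _
            _ = ENNReal.ofReal C * 2 ^ Q * (e j) ^ (Q - p) := by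
                have h2r : (0:ℝ) < 2 * rad j := by linarith [hrad j]
                rw [ENNReal.ofReal_mul hC.le,
                  ← ENNReal.ofReal_rpow_of_pos h2r,
                  ENNReal.ofReal_mul (by norm_num : (0:ℝ) ≤ 2), ENNReal.ofReal_ofNat,
                  ENNReal.mul_rpow_of_nonneg _ _ hQ0, ENNReal.inv_rpow,
                  ENNReal.rpow_sub _ _ (he0 j) (het j), div_eq_mul_inv]
                ring
      _ = ENNReal.ofReal C * 2 ^ Q * ∑' j, (e j) ^ (Q - p) := by rw [ENNReal.tsum_mul_left]
      _ ≤ ENNReal.ofReal C * 2 ^ Q * S := mul_le_mul_right hS _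
  · -- curve bound
    rintro L hL c hc ⟨tA, htA, hcA⟩ ⟨tB, htB, hcB⟩
    obtain ⟨j, hj⟩ : ∃ j, c tA ∈ closedBall (x j) (rad j) := by
      simpa [mem_iUnion] using hcov hcA
    have hdist : R < dist (c tB) (c tA) := by
      by_contra h
      exact hcB (mem_cthickening_of_dist_le _ _ _ _ hcA (not_lt.1 h))
    have hlip : dist (c tA) (c tB) ≤ |tA - tB| := by
      have := hc.1.dist_le_mul tA htA tB htB
      simpa [Real.dist_eq] using this
    have habs : rad j < |tA - tB| :=
      lt_of_le_of_lt (hradR j) (lt_of_lt_of_le hdist (by rwa [dist_comm] at hlip))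
    -- find a subinterval
    obtain ⟨a, ha0, haL, haA⟩ : ∃ a, 0 ≤ a ∧ a + rad j ≤ L ∧ tA ∈ Icc a (a + rad j) := by
      rcases le_or_gt tA tB with hod | hod
      · refine ⟨tA, htA.1, ?_, by constructor <;> [rfl; linarith [hrad j]]⟩
        rw [abs_of_nonpos (by linarith)] at habs
        linarith [htB.2]
      · refine ⟨tA - rad j, ?_, by linarith [htA.2], by constructor <;> [linarith [hrad j]; linarith]⟩
        rw [abs_of_nonneg (by linarith)] at habs
        linarith [htB.1]
    have hsub : Icc a (a + rad j) ⊆ Icc 0 L := fun t ht =>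
      ⟨le_trans ha0 ht.1, le_trans ht.2 haL⟩
    have hball2 : ∀ t ∈ Icc a (a + rad j), c t ∈ closedBall (x j) (2 * rad j) := by
      intro t ht
      have h1 : dist (c t) (c tA) ≤ rad j := by
        have := hc.1.dist_le_mul t (hsub ht) tA htA
        rw [NNReal.coe_one, one_mul, Real.dist_eq] at this
        refine this.trans (abs_le.2 ⟨?_, ?_⟩) <;>
          [linarith [ht.1, haA.2]; linarith [ht.2, haA.1]]
      have h2 : dist (c tA) (x j) ≤ rad j := hj
      simp only [mem_closedBall]
      calc dist (c t) (x j) ≤ dist (c t) (c tA) + dist (c tA) (x j) := dist_triangle _ _ _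
        _ ≤ 2 * rad j := by linarith
    calc (1:ℝ≥0∞) = (e j)⁻¹ * e j := (ENNReal.inv_mul_cancel (he0 j) (het j)).symm
      _ = (e j)⁻¹ * (volume.restrict (Icc 0 L)) (Icc a (a + rad j)) := by
          rw [Measure.restrict_apply measurableSet_Icc,
            inter_eq_self_of_subset_left hsub, Real.volume_Icc]
          simp [he]
      _ = ∫⁻ t in Icc 0 L, (Icc a (a + rad j)).indicator (fun _ => (e j)⁻¹) t ∂volume := by
          rw [lintegral_indicator measurableSet_Icc, setLIntegral_const]
      _ ≤ ∫⁻ t in Icc 0 L, ⨆ i, T i (c t) ∂volume := by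
          refine lintegral_mono fun t => ?_
          by_cases ht : t ∈ Icc a (a + rad j)
          · rw [indicator_of_mem ht]
            refine le_iSup_of_le j ?_
            rw [hT]
            simp [indicator_of_mem (hball2 t ht)]
          · simp [indicator_of_notMem ht]

noncomputable def Fconst (C Q p h : ℝ) : ℝ :=
  (ENNReal.ofReal C * (2:ℝ≥0∞) ^ Q *
    (ENNReal.ofReal h + 1 + (if p < Q then (1 - (2:ℝ≥0∞)⁻¹ ^ (Q - p))⁻¹ else 0))).toReal + 1

/-- There is a constant `C'' > 0` depending only on `C`, `Q`, `p` and
`H^{Q-p}(A)` (formalized as a positive function `F` of these four quantities) such that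
whenever `(X,d)` is a metric space, `μ` a Borel measure with `μ(B(x,r)) ≤ C·r^Q`
(closed balls), `1 < p ≤ Q`, `A ⊆ X` compact with `H^{Q-p}(A) < ∞`, and `R > 0`,
then for every `r ∈ (0,R)` there is a Borel `ρ : X → [0,∞]` with `∫ ρ^p dμ ≤ C''`
such that `∫_0^L ρ(c(t)) dt ≥ 1` for every arc-length parametrized curve
`c : [0,L] → X` whose image meets `A` and meets `X \ N(A,R)`. -/
theorem stmt7 :
    ∃ F : ℝ → ℝ → ℝ → ℝ → ℝ, (∀ C Q p h, 0 < F C Q p h) ∧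
      ∀ (X : Type) [MetricSpace X] [MeasurableSpace X] [BorelSpace X]
        (μ : Measure X) (p Q C : ℝ), 1 < p → p ≤ Q → 0 < C →
        (∀ (x : X) (r : ℝ), 0 < r →
          μ (closedBall x r) ≤ ENNReal.ofReal (C * r ^ Q)) →
        ∀ A : Set X, IsCompact A → μH[Q - p] A < ⊤ →
        ∀ R : ℝ, 0 < R → ∀ r : ℝ, 0 < r → r < R →
        ∃ ρ : X → ℝ≥0∞, Measurable ρ ∧
          (∫⁻ x, ρ x ^ p ∂μ) ≤ ENNReal.ofReal (F C Q p (μH[Q - p] A).toReal) ∧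
          ∀ L : ℝ, 0 < L → ∀ c : ℝ → X, IsArcLengthParam L c →
            (∃ t ∈ Icc 0 L, c t ∈ A) →
            (∃ t ∈ Icc 0 L, c t ∉ cthickening R A) →
            1 ≤ ∫⁻ t in Icc 0 L, ρ (c t) ∂volume := by
  classical
  refine ⟨Fconst, fun C Q p h => add_pos_of_nonneg_of_pos ENNReal.toReal_nonneg one_pos, ?_⟩
  intro X _ _ _ μ p Q C hp hpQ hC hball A hAc hH R hR r hr hrR
  have hp0 : (0:ℝ) < p := lt_trans one_pos hp
  have hQ0 : (0:ℝ) ≤ Q := le_trans hp0.le hpQ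
  rcases eq_empty_or_nonempty A with hA | hA
  · refine ⟨0, measurable_const, ?_, ?_⟩
    · simp [ENNReal.zero_rpow_of_pos hp0]
    · rintro L hL c hc ⟨t, ht, htA⟩ _
      rw [hA] at htA; exact absurd htA (notMem_empty _)
  · set H := μH[Q - p] A with hHdef
    set δ : ℝ≥0∞ := ENNReal.ofReal (r/4) with hδdef
    have hδ : 0 < δ := ENNReal.ofReal_pos.2 (by linarith)
    have h1 : (⨅ (t : ℕ → Set X) (_ : A ⊆ ⋃ n, t n) (_ : ∀ n, EMetric.diam (t n) ≤ δ),
        ∑' n, ⨆ _ : (t n).Nonempty, EMetric.diam (t n) ^ (Q - p)) ≤ H := by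
      rw [hHdef, MeasureTheory.Measure.hausdorffMeasure_apply]
      exact le_iSup₂ (f := fun (r' : ℝ≥0∞) (_ : 0 < r') =>
        ⨅ (t : ℕ → Set X) (_ : A ⊆ ⋃ n, t n) (_ : ∀ n, EMetric.diam (t n) ≤ r'),
          ∑' n, ⨆ _ : (t n).Nonempty, EMetric.diam (t n) ^ (Q - p)) δ hδ
    have h2 := lt_of_le_of_lt h1 (ENNReal.lt_add_right hH.ne one_ne_zero)
    simp only [iInf_lt_iff] at h2
    obtain ⟨t, htcov, htdiam, htsum⟩ := h2
    set m : ℝ := min 1 (r/4) with hm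
    have hm0 : 0 < m := lt_min one_pos (by linarith)
    have hm1 : m ≤ 1 := min_le_left _ _
    have hmr : m ≤ r/4 := min_le_right _ _
    set ι := {n : ℕ // (t n ∩ A).Nonempty} with hι
    set xc : ι → X := fun j => j.2.choose with hxc
    have hxc1 : ∀ j : ι, xc j ∈ t j.1 := fun j => j.2.choose_spec.1
    set rad : ι → ℝ :=
      fun j => max (EMetric.diam (t j.1)).toReal (m * (1/2)^((j.1:ℕ)+1)) with hraddef
    have hdfin : ∀ n, EMetric.diam (t n) ≠ ⊤ :=
      fun n => ((htdiam n).trans_lt ENNReal.ofReal_lt_top).ne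
    have hdle : ∀ n, (EMetric.diam (t n)).toReal ≤ r/4 :=
      fun n => ENNReal.toReal_le_of_le_ofReal (by linarith) (htdiam n)
    have hradpos : ∀ j, 0 < rad j := fun j => lt_max_of_lt_right (by positivity)
    have hradR : ∀ j, rad j ≤ R := by
      intro j
      refine max_le ((hdle _).trans (by linarith)) ?_
      have h12 : ((1:ℝ)/2)^((j.1:ℕ)+1) ≤ 1 := pow_le_one₀ (by norm_num) (by norm_num)
      nlinarith
    have hcov : A ⊆ ⋃ j : ι, closedBall (xc j) (rad j) := by
      intro a ha
      obtain ⟨n, hn⟩ : ∃ n, a ∈ t n := mem_iUnion.1 (htcov ha)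
      refine mem_iUnion.2 ⟨⟨n, ⟨a, hn, ha⟩⟩, ?_⟩
      have hed : edist a (xc ⟨n, ⟨a, hn, ha⟩⟩) ≤ EMetric.diam (t n) :=
        EMetric.edist_le_diam_of_mem hn (hxc1 ⟨n, ⟨a, hn, ha⟩⟩)
      have hda : dist a (xc ⟨n, ⟨a, hn, ha⟩⟩) ≤ (EMetric.diam (t n)).toReal := by
        rw [dist_edist]; exact ENNReal.toReal_mono (hdfin n) hed
      exact mem_closedBall.2 (hda.trans (le_max_left _ _))
    set S : ℝ≥0∞ := H + 1 + (if p < Q then (1 - (2:ℝ≥0∞)⁻¹ ^ (Q - p))⁻¹ else 0) with hSdef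
    set f : ℕ → ℝ≥0∞ := fun n => ⨆ _ : (t n).Nonempty, EMetric.diam (t n) ^ (Q - p) with hf
    have hfj : ∀ j : ι, f j.1 = EMetric.diam (t j.1) ^ (Q - p) :=
      fun j => iSup_pos ⟨xc j, hxc1 j⟩
    have hsumf : ∑' j : ι, f j.1 ≤ H + 1 :=
      le_trans (ENNReal.tsum_comp_le_tsum_of_injective Subtype.val_injective f) htsum.le
    have hofmax : ∀ j : ι, ENNReal.ofReal (rad j)
        = max (EMetric.diam (t j.1)) (ENNReal.ofReal (m * (1/2)^((j.1:ℕ)+1))) := by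
      intro j
      have hmono : Monotone ENNReal.ofReal := fun _ _ h => ENNReal.ofReal_le_ofReal h
      rw [hraddef]
      simp only
      rw [hmono.map_max, ENNReal.ofReal_toReal (hdfin j.1)]
    have hiS : ∑' j : ι, (ENNReal.ofReal (rad j)) ^ (Q - p) ≤ S := by
      rcases eq_or_lt_of_le hpQ with heq | hlt
      · have hz : Q - p = 0 := by linarith
        have : ∀ j : ι, (ENNReal.ofReal (rad j)) ^ (Q - p) = f j.1 := by
          intro j
          rw [hfj j, hz, ENNReal.rpow_zero, ENNReal.rpow_zero]
        rw [tsum_congr this]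
        exact hsumf.trans (self_le_add_right _ _)
      · have hα : 0 < Q - p := sub_pos.2 hlt
        set y : ℝ≥0∞ := (2:ℝ≥0∞)⁻¹ ^ (Q - p) with hy
        have hy1 : y < 1 := ENNReal.rpow_lt_one (by simp [ENNReal.inv_lt_one]) hα
        set g : ℕ → ℝ≥0∞ := fun n => y ^ (n+1) with hg
        have hterm : ∀ j : ι, (ENNReal.ofReal (rad j)) ^ (Q - p) ≤ f j.1 + g j.1 := by
          intro j
          rw [hofmax j]
          rcases max_cases (EMetric.diam (t j.1)) (ENNReal.ofReal (m * (1/2)^((j.1:ℕ)+1)))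
            with ⟨hmx, _⟩ | ⟨hmx, _⟩
          · rw [hmx, hfj j]; exact le_self_add
          · rw [hmx]
            refine le_add_left ?_
            have h1 : ENNReal.ofReal (m * (1/2)^((j.1:ℕ)+1))
                ≤ (2:ℝ≥0∞)⁻¹ ^ ((j.1:ℕ)+1) := by
              have : ENNReal.ofReal (m * (1/2)^((j.1:ℕ)+1))
                  ≤ ENNReal.ofReal ((1/2)^((j.1:ℕ)+1)) :=
                ENNReal.ofReal_le_ofReal
                  (mul_le_of_le_one_left (by positivity) hm1)
              refine this.trans_eq ?_
              rw [ENNReal.ofReal_pow (by norm_num), one_div,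
                ENNReal.ofReal_inv_of_pos two_pos, ENNReal.ofReal_ofNat]
            calc ENNReal.ofReal (m * (1/2)^((j.1:ℕ)+1)) ^ (Q - p)
                ≤ ((2:ℝ≥0∞)⁻¹ ^ ((j.1:ℕ)+1)) ^ (Q - p) :=
                  ENNReal.rpow_le_rpow h1 hα.le
              _ = g j.1 := by
                  rw [hg, hy]
                  rw [← ENNReal.rpow_natCast (2:ℝ≥0∞)⁻¹ ((j.1:ℕ)+1), ← ENNReal.rpow_mul,
                    mul_comm, ENNReal.rpow_mul, ENNReal.rpow_natCast]
        calc ∑' j : ι, (ENNReal.ofReal (rad j)) ^ (Q - p)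
            ≤ ∑' j : ι, (f j.1 + g j.1) := ENNReal.tsum_le_tsum hterm
          _ = (∑' j : ι, f j.1) + ∑' j : ι, g j.1 := ENNReal.tsum_add
          _ ≤ (H + 1) + ∑' n : ℕ, g n :=
              add_le_add hsumf (ENNReal.tsum_comp_le_tsum_of_injective Subtype.val_injective g)
          _ ≤ (H + 1) + (1 - y)⁻¹ := by
              refine add_le_add_right ?_ _
              have : ∀ n : ℕ, g n ≤ y ^ n := by
                intro n
                exact pow_le_pow_right_of_le_one' hy1.le (Nat.le_succ n)
              exact (ENNReal.tsum_le_tsum this).trans_eq (ENNReal.tsum_geometric y)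
          _ = S := by rw [hSdef, if_pos hlt]
    obtain ⟨ρ, hρm, hρint, hρcurve⟩ :=
      key_lemma μ p Q C hp hpQ hC hball xc rad hradpos hR hradR hcov hiS
    refine ⟨ρ, hρm, hρint.trans ?_, hρcurve⟩
    have hSne : S ≠ ⊤ := by
      refine ENNReal.add_ne_top.2 ⟨ENNReal.add_ne_top.2 ⟨hH.ne, ENNReal.one_ne_top⟩, ?_⟩
      split_ifs with hlt
      · refine ENNReal.inv_ne_top.2 ?_
        have hy1 : ((2:ℝ≥0∞)⁻¹ ^ (Q - p)) < 1 :=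
          ENNReal.rpow_lt_one (by simp [ENNReal.inv_lt_one]) (sub_pos.2 hlt)
        exact (tsub_pos_of_lt hy1).ne'
      · exact ENNReal.zero_ne_top
    have hBne : ENNReal.ofReal C * (2:ℝ≥0∞) ^ Q * S ≠ ⊤ :=
      ENNReal.mul_ne_top
        (ENNReal.mul_ne_top ENNReal.ofReal_ne_top
          (ENNReal.rpow_ne_top_of_nonneg hQ0 ENNReal.ofNat_ne_top)) hSne
    have hform : Fconst C Q p H.toReal
        = (ENNReal.ofReal C * (2:ℝ≥0∞) ^ Q * S).toReal + 1 := by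
      rw [Fconst, hSdef, ENNReal.ofReal_toReal hH.ne]
    rw [hform]
    calc ENNReal.ofReal C * (2:ℝ≥0∞) ^ Q * S
        = ENNReal.ofReal ((ENNReal.ofReal C * (2:ℝ≥0∞) ^ Q * S).toReal) :=
          (ENNReal.ofReal_toReal hBne).symm
      _ ≤ ENNReal.ofReal ((ENNReal.ofReal C * (2:ℝ≥0∞) ^ Q * S).toReal + 1) :=
          ENNReal.ofReal_le_ofReal (by linarith)
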